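/- Under the hypotheses of the discrete inequality theorem (g_{n+1} ≤ g_n(1 - h_nγ_n) + h_nα(n,g_n) + h_nβ_n with the comparison condition α(n,1/μ_n) + β_n ≤ (1/μ_n)(γ_n - (μ_{n+1}-μ_n)/(μ_n h_n)) and g_0 ≤ 1/μ_0), if μ_n → ∞ then g_n → 0 as n → ∞. -/

import Mathlib

open Filter

/-- Discrete theorem, limit version: if in addition `μ_n → ∞` then `g_n → 0`. -/
theorem stmt7
    (g β h γ μ : ℕ → ℝ) (α : ℕ → ℝ → ℝ)
    (hgnonneg : ∀ n, 0 ≤ g n)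
    (hβnonneg : ∀ n, 0 ≤ β n)
    (hh : ∀ n, 0 < h n)
    (hhγ : ∀ n, 0 < h n * γ n ∧ h n * γ n < 1)
    (hαnonneg : ∀ n, ∀ y, 0 ≤ y → 0 ≤ α n y)
    (hαmono : ∀ n, ∀ y z, 0 ≤ y → y ≤ z → α n y ≤ α n z)
    (hineq : ∀ n, g (n + 1) ≤ g n * (1 - h n * γ n) + h n * α n (g n) + h n * β n)
    (hμpos : ∀ n, 0 < μ n)
    (hcomp : ∀ n, α n (1 / μ n) + β n ≤ (1 / μ n) * (γ n - (μ (n + 1) - μ n) / (μ n * h n)))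
    (hinit : g 0 ≤ 1 / μ 0)
    (hμtop : Tendsto μ atTop atTop) :
    Tendsto g atTop (nhds 0) := by
  have key : ∀ n, g n ≤ 1 / μ n := by
    intro n
    induction n with
    | zero => exact hinit
    | succ n ih =>
      have hμn := hμpos n
      have hμn1 := hμpos (n + 1)
      have hhn := hh n
      have h1 := (hhγ n).2
      have h0 := (hhγ n).1
      have step1 : g (n + 1) ≤ (1 / μ n) * (1 - h n * γ n) + h n * (α n (1 / μ n) + β n) := by
        have hi := hineq n
        have hm := hαmono n (g n) (1 / μ n) (hgnonneg n) ih
        nlinarith [hgnonneg n]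
      have step2 : (1 / μ n) * (1 - h n * γ n) + h n * (α n (1 / μ n) + β n)
          ≤ (1 / μ n) * (1 - h n * γ n)
            + h n * ((1 / μ n) * (γ n - (μ (n + 1) - μ n) / (μ n * h n))) := by
        have hc := hcomp n
        nlinarith
      have step3 : (1 / μ n) * (1 - h n * γ n)
            + h n * ((1 / μ n) * (γ n - (μ (n + 1) - μ n) / (μ n * h n))) ≤ 1 / μ (n + 1) := by
        have heq : (1 / μ n) * (1 - h n * γ n)
            + h n * ((1 / μ n) * (γ n - (μ (n + 1) - μ n) / (μ n * h n)))
            = 1 / μ n - (μ (n + 1) - μ n) / (μ n * μ n) := by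
          field_simp
          ring
        rw [heq, div_sub_div _ _ (ne_of_gt hμn) (by positivity),
          div_le_div_iff₀ (by positivity) hμn1]
        nlinarith [sq_nonneg (μ n - μ (n + 1)), mul_pos hμn hμn1]
      linarith
  have hlim : Tendsto (fun n => 1 / μ n) atTop (nhds 0) := by
    simpa [one_div, Pi.inv_def] using hμtop.inv_tendsto_atTop
  exact squeeze_zero hgnonneg key hlim
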